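/- Let H and V be Hilbert spaces, a(·,·), c(·,·) symmetric bounded coercive bilinear forms on H and V respectively, and b(·,·) a bounded bilinear form on H × V. Then for every ε > 0 and every (f, g) ∈ H* × V*, the mixed system a(u,v) + b(v,p) = f(v) for all v ∈ H, b(u,q) − ε² c(p,q) = g(q) for all q ∈ V, has a unique solution (u,p) ∈ H × V. -/

import Mathlib

set_option maxHeartbeats 1000000 in
/-- Unique solvability of the penalized mixed system
`a(u,v) + b(v,p) = f(v)` for all `v ∈ H`, `b(u,q) − ε² c(p,q) = g(q)` for all `q ∈ V`,
where `a` and `c` are symmetric bounded coercive bilinear forms and `b` is bounded. -/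
theorem stmt3
    {H V : Type*}
    [NormedAddCommGroup H] [InnerProductSpace ℝ H] [CompleteSpace H]
    [NormedAddCommGroup V] [InnerProductSpace ℝ V] [CompleteSpace V]
    (a : H →ₗ[ℝ] H →ₗ[ℝ] ℝ) (c : V →ₗ[ℝ] V →ₗ[ℝ] ℝ) (b : H →ₗ[ℝ] V →ₗ[ℝ] ℝ)
    (C : ℝ) (hC : 0 < C)
    (ha_symm : ∀ u v : H, a u v = a v u)
    (ha_bound : ∀ u v : H, |a u v| ≤ C * ‖u‖ * ‖v‖)
    (ha_coer : ∀ u : H, C⁻¹ * ‖u‖ ^ 2 ≤ a u u)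
    (hc_symm : ∀ p q : V, c p q = c q p)
    (hc_bound : ∀ p q : V, |c p q| ≤ C * ‖p‖ * ‖q‖)
    (hc_coer : ∀ p : V, C⁻¹ * ‖p‖ ^ 2 ≤ c p p)
    (hb_bound : ∀ (v : H) (q : V), |b v q| ≤ C * ‖v‖ * ‖q‖)
    (ε : ℝ) (hε : 0 < ε) (f : H →L[ℝ] ℝ) (g : V →L[ℝ] ℝ) :
    ∃! up : H × V,
      (∀ v : H, a up.1 v + b v up.2 = f v) ∧
      (∀ q : V, b up.1 q - ε ^ 2 * c up.2 q = g q) := by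
  classical
  set W := WithLp 2 (H × V) with hW
  -- the bilinear form on the product
  let P : (H × V) →ₗ[ℝ] (H × V) →ₗ[ℝ] ℝ := LinearMap.mk₂ ℝ
    (fun x y => a x.1 y.1 + b y.1 x.2 - b x.1 y.2 + ε ^ 2 * c x.2 y.2)
    (by intro m m' y
        simp only [Prod.fst_add, Prod.snd_add, map_add, LinearMap.add_apply]
        ring)
    (by intro s m y
        simp only [Prod.smul_fst, Prod.smul_snd, map_smul, LinearMap.smul_apply,
          smul_eq_mul]
        ring)
    (by intro x y y'
        simp only [Prod.fst_add, Prod.snd_add, map_add, LinearMap.add_apply]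
        ring)
    (by intro s x y
        simp only [Prod.smul_fst, Prod.smul_snd, map_smul, LinearMap.smul_apply,
          smul_eq_mul]
        ring)
  let e : W ≃ₗ[ℝ] H × V := WithLp.linearEquiv 2 ℝ (H × V)
  let B₀ : W →ₗ[ℝ] W →ₗ[ℝ] ℝ := LinearMap.compl₂ (P.comp e.toLinearMap) e.toLinearMap
  have hfst : ∀ x : W, ‖x.fst‖ ≤ ‖x‖ := by
    intro x
    have h := WithLp.prod_norm_sq_eq_of_L2 x
    nlinarith [norm_nonneg x, norm_nonneg x.fst, norm_nonneg x.snd, sq_nonneg (‖x‖ + ‖x.fst‖)]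
  have hsnd : ∀ x : W, ‖x.snd‖ ≤ ‖x‖ := by
    intro x
    have h := WithLp.prod_norm_sq_eq_of_L2 x
    nlinarith [norm_nonneg x, norm_nonneg x.fst, norm_nonneg x.snd, sq_nonneg (‖x‖ + ‖x.snd‖)]
  have hbound : ∀ x y : W, ‖B₀ x y‖ ≤ (3 + ε ^ 2) * C * ‖x‖ * ‖y‖ := by
    intro x y
    have hB : B₀ x y = a x.fst y.fst + b y.fst x.snd - b x.fst y.snd + ε ^ 2 * c x.snd y.snd := rfl
    have k1 : C * ‖x.fst‖ * ‖y.fst‖ ≤ C * ‖x‖ * ‖y‖ := by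
      have := hfst x; have := hfst y
      gcongr
    have k2 : C * ‖y.fst‖ * ‖x.snd‖ ≤ C * ‖x‖ * ‖y‖ := by
      have h1 := hfst y; have h2 := hsnd x
      calc C * ‖y.fst‖ * ‖x.snd‖ ≤ C * ‖y‖ * ‖x‖ := by gcongr
        _ = C * ‖x‖ * ‖y‖ := by ring
    have k3 : C * ‖x.fst‖ * ‖y.snd‖ ≤ C * ‖x‖ * ‖y‖ := by
      have := hfst x; have := hsnd y
      gcongr
    have k4 : C * ‖x.snd‖ * ‖y.snd‖ ≤ C * ‖x‖ * ‖y‖ := by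
      have := hsnd x; have := hsnd y
      gcongr
    have t1 := (ha_bound x.fst y.fst).trans k1
    have t2 := (hb_bound y.fst x.snd).trans k2
    have t3 := (hb_bound x.fst y.snd).trans k3
    have t4 := (hc_bound x.snd y.snd).trans k4
    have habs := abs_le.mp t1
    have hbabs := abs_le.mp t2
    have hbabs' := abs_le.mp t3
    have hcabs := abs_le.mp t4
    rw [hB, Real.norm_eq_abs, abs_le]
    constructor <;> nlinarith [sq_nonneg ε, hε]
  let B : W →L[ℝ] W →L[ℝ] ℝ := LinearMap.mkContinuous₂ B₀ ((3 + ε ^ 2) * C) hbound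
  have hBapp : ∀ x y : W, B x y = a x.fst y.fst + b y.fst x.snd - b x.fst y.snd + ε ^ 2 * c x.snd y.snd :=
    fun x y => rfl
  have hκ : 0 < min 1 (ε ^ 2) * C⁻¹ := by positivity
  have coer : IsCoercive B := by
    refine ⟨min 1 (ε ^ 2) * C⁻¹, hκ, fun x => ?_⟩
    have hB : B x x = a x.fst x.fst + ε ^ 2 * c x.snd x.snd := by rw [hBapp]; ring
    have hnsq : ‖x‖ ^ 2 = ‖x.fst‖ ^ 2 + ‖x.snd‖ ^ 2 := WithLp.prod_norm_sq_eq_of_L2 x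
    have h1 : min 1 (ε ^ 2) * C⁻¹ * ‖x.fst‖ ^ 2 ≤ C⁻¹ * ‖x.fst‖ ^ 2 := by
      rw [mul_assoc]
      calc min 1 (ε ^ 2) * (C⁻¹ * ‖x.fst‖ ^ 2) ≤ 1 * (C⁻¹ * ‖x.fst‖ ^ 2) :=
            mul_le_mul_of_nonneg_right (min_le_left 1 (ε ^ 2)) (by positivity)
        _ = C⁻¹ * ‖x.fst‖ ^ 2 := one_mul _
    have h2 : min 1 (ε ^ 2) * C⁻¹ * ‖x.snd‖ ^ 2 ≤ ε ^ 2 * (C⁻¹ * ‖x.snd‖ ^ 2) := by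
      rw [mul_assoc]
      exact mul_le_mul_of_nonneg_right (min_le_right 1 (ε ^ 2)) (by positivity)
    have h3 := ha_coer x.fst
    have h4 : ε ^ 2 * (C⁻¹ * ‖x.snd‖ ^ 2) ≤ ε ^ 2 * c x.snd x.snd :=
      mul_le_mul_of_nonneg_left (hc_coer x.snd) (by positivity)
    have : min 1 (ε ^ 2) * C⁻¹ * ‖x‖ * ‖x‖ = min 1 (ε ^ 2) * C⁻¹ * ‖x.fst‖ ^ 2
        + min 1 (ε ^ 2) * C⁻¹ * ‖x.snd‖ ^ 2 := by
      have : ‖x‖ * ‖x‖ = ‖x‖ ^ 2 := (sq ‖x‖).symm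
      rw [mul_assoc, this, hnsq]; ring
    rw [this, hB]
    linarith
  -- the right-hand side functional
  let F : W →L[ℝ] ℝ :=
    (f.comp (ContinuousLinearMap.fst ℝ H V) - g.comp (ContinuousLinearMap.snd ℝ H V)).comp
      (WithLp.prodContinuousLinearEquiv 2 ℝ H V).toContinuousLinearMap
  have hFapp : ∀ y : W, F y = f y.fst - g y.snd := fun y => rfl
  -- Lax-Milgram
  let M := coer.continuousLinearEquivOfBilin
  let z : W := (InnerProductSpace.toDual ℝ W).symm F
  let x : W := M.symm z
  have hx : ∀ w : W, B x w = F w := by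
    intro w
    have h1 : (inner ℝ (M x) w : ℝ) = B x w := coer.continuousLinearEquivOfBilin_apply x w
    have h2 : M x = z := M.apply_symm_apply z
    have h3 : (inner ℝ z w : ℝ) = F w := InnerProductSpace.toDual_symm_apply
    rw [← h1, h2, h3]
  have e1 : ∀ v : H, a x.fst v + b v x.snd = f v := by
    intro v
    have h := hx ((WithLp.equiv 2 (H × V)).symm (v, 0))
    rw [hBapp, hFapp] at h
    simp only [WithLp.equiv_symm_apply, WithLp.toLp_fst, WithLp.toLp_snd] at h
    simpa using h
  have e2 : ∀ q : V, b x.fst q - ε ^ 2 * c x.snd q = g q := by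
    intro q
    have h := hx ((WithLp.equiv 2 (H × V)).symm (0, q))
    rw [hBapp, hFapp] at h
    simp only [WithLp.equiv_symm_apply, WithLp.toLp_fst, WithLp.toLp_snd] at h
    simp only [map_zero, LinearMap.zero_apply, zero_add, zero_sub, map_zero] at h
    linarith
  refine ⟨(x.fst, x.snd), ⟨e1, e2⟩, ?_⟩
  rintro ⟨u', p'⟩ ⟨h1', h2'⟩
  -- uniqueness via energy argument
  set du : H := u' - x.fst with hdu
  set dp : V := p' - x.snd with hdp
  have hA : a du du + b du dp = 0 := by
    have hv := h1' (u' - x.fst)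
    have hv' := e1 (u' - x.fst)
    simp only [map_sub, LinearMap.sub_apply] at hv hv'
    simp only [hdu, hdp, map_sub, LinearMap.sub_apply]
    linarith
  have hB2 : b du dp - ε ^ 2 * c dp dp = 0 := by
    have hq := h2' (p' - x.snd)
    have hq' := e2 (p' - x.snd)
    simp only [map_sub, LinearMap.sub_apply] at hq hq'
    simp only [hdu, hdp, map_sub, LinearMap.sub_apply]
    ring_nf at hq hq' ⊢
    linarith
  have hsum : a du du + ε ^ 2 * c dp dp = 0 := by linarith
  have hca := ha_coer du
  have hcc : ε ^ 2 * (C⁻¹ * ‖dp‖ ^ 2) ≤ ε ^ 2 * c dp dp :=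
    mul_le_mul_of_nonneg_left (hc_coer dp) (by positivity)
  have k1 : (0:ℝ) ≤ ε ^ 2 * (C⁻¹ * ‖dp‖ ^ 2) := by positivity
  have k0 : (0:ℝ) ≤ C⁻¹ * ‖du‖ ^ 2 := by positivity
  have k2 : C⁻¹ * ‖du‖ ^ 2 ≤ 0 := by linarith
  have k3 : ε ^ 2 * (C⁻¹ * ‖dp‖ ^ 2) ≤ 0 := by linarith
  have hpos : (0:ℝ) < ε ^ 2 * C⁻¹ := by positivity
  have hdu0 : ‖du‖ ^ 2 ≤ 0 := by nlinarith [k2, inv_pos.mpr hC]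
  have hdp0 : ‖dp‖ ^ 2 ≤ 0 := by nlinarith [k3, hpos]
  have hdu' : du = 0 := by
    have : ‖du‖ = 0 := by nlinarith [norm_nonneg du]
    exact norm_eq_zero.mp this
  have hdp' : dp = 0 := by
    have : ‖dp‖ = 0 := by nlinarith [norm_nonneg dp]
    exact norm_eq_zero.mp this
  have hu : u' = x.fst := by rw [hdu] at hdu'; exact sub_eq_zero.mp hdu'
  have hp : p' = x.snd := by rw [hdp] at hdp'; exact sub_eq_zero.mp hdp'
  rw [hu, hp]
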